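/- arXiv:2302.13204 — 3 statements merged into one kernel-verified Lean document; each statement's English description precedes it below -/
import Mathlib

section
/- (i) Let g = gcd(m, n+1). Then for every integer k with 1 ≤ k ≤ g−1, the number 2t cos(πk/g) is an eigenvalue of H, regardless of the values of the complex defect potentials z_m and z_{m̄}. (ii) If moreover z_{m̄} = −z_m, then, with g' = gcd(2m, n+1), for every integer k with 1 ≤ k ≤ g'−1 the number 2t cos(πk/g') is an eigenvalue of H. -/
open Matrix Complex Polynomial

/-- The uniform `n`-site open chain with hopping `t` and defect potentials
`zm` at site `m` and `zmb` at the mirror site `m̄ = n+1−m` (1-based sites). -/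
noncomputable def Hu (n m : ℕ) (t : ℝ) (zm zmb : ℂ) : Matrix (Fin n) (Fin n) ℂ :=
  fun i j =>
    if (i : ℕ) = (j : ℕ) then
      (if (i : ℕ) + 1 = m then zm else if (i : ℕ) + 1 = n + 1 - m then zmb else 0)
    else if (i : ℕ) + 1 = (j : ℕ) ∨ (j : ℕ) + 1 = (i : ℕ) then (t : ℂ)
    else 0


lemma mem_spectrum_of_eigvec {n : ℕ} (M : Matrix (Fin n) (Fin n) ℂ) (μ : ℂ)
    (v : Fin n → ℂ) (hv : v ≠ 0) (h : M.mulVec v = μ • v) : μ ∈ spectrum ℂ M := by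
  rw [spectrum.mem_iff]
  intro hU
  have inj := Matrix.mulVec_injective_iff_isUnit.mpr hU
  apply hv
  have h0 : (algebraMap ℂ (Matrix (Fin n) (Fin n) ℂ) μ - M).mulVec v =
      (algebraMap ℂ (Matrix (Fin n) (Fin n) ℂ) μ - M).mulVec 0 := by
    rw [Matrix.sub_mulVec, Algebra.algebraMap_eq_smul_one, Matrix.smul_mulVec,
      Matrix.one_mulVec, h, Matrix.mulVec_zero, sub_self]
  exact inj h0


lemma sum_ite_fin {n : ℕ} (c : ℕ) (f : ℕ → ℂ) :
    ∑ j : Fin n, (if (j:ℕ) = c then f (j:ℕ) else 0) = if c < n then f c else 0 := by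
  split
  · next h =>
    rw [Finset.sum_eq_single (⟨c, h⟩ : Fin n)]
    · simp
    · intro j _ hj
      rw [if_neg]
      simpa [Fin.ext_iff] using hj
    · simp
  · next h =>
    apply Finset.sum_eq_zero
    intro j _
    rw [if_neg]
    omega

lemma sum_ite_fin' {n : ℕ} (c : ℕ) (f : ℕ → ℂ) :
    ∑ j : Fin n, (if (j:ℕ)+1 = c then f (j:ℕ) else 0) =
      if c-1 < n ∧ 1 ≤ c then f (c-1) else 0 := by
  split
  · next h =>
    rw [Finset.sum_eq_single (⟨c-1, h.1⟩ : Fin n)]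
    · have hc : ((⟨c-1, h.1⟩ : Fin n) : ℕ) + 1 = c := by
        show c - 1 + 1 = c
        omega
      rw [if_pos hc]
    · intro j _ hj
      apply if_neg
      intro hc
      apply hj
      apply Fin.ext
      show (j:ℕ) = c - 1
      omega
    · simp
  · next h =>
    apply Finset.sum_eq_zero
    intro j _
    rw [if_neg]
    omega

lemma Hu_mulVec (n m : ℕ) (t : ℝ) (zm zmb : ℂ) (V : ℕ → ℂ)
    (hV0 : V 0 = 0) (hVn : V (n+1) = 0) (i : Fin n) :
    (Hu n m t zm zmb).mulVec (fun j => V ((j:ℕ)+1)) i =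
      t * V (i:ℕ) + t * V ((i:ℕ)+2) +
      (if (i:ℕ)+1 = m then zm else if (i:ℕ)+1 = n+1-m then zmb else 0) * V ((i:ℕ)+1) := by
  have key : ∀ j : Fin n, Hu n m t zm zmb i j * V ((j:ℕ)+1) =
      (if (j:ℕ) = (i:ℕ) then (if (i:ℕ)+1 = m then zm else if (i:ℕ)+1 = n+1-m then zmb else 0) * V ((j:ℕ)+1) else 0)
    + ((if (j:ℕ) = (i:ℕ)+1 then (t:ℂ) * V ((j:ℕ)+1) else 0)
    + (if (j:ℕ)+1 = (i:ℕ) then (t:ℂ) * V ((j:ℕ)+1) else 0)) := by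
    intro j
    simp only [Hu]
    split_ifs <;> first | ring1 | (exfalso; omega)
  simp only [Matrix.mulVec, dotProduct]
  rw [Finset.sum_congr rfl (fun j _ => key j), Finset.sum_add_distrib, Finset.sum_add_distrib]
  rw [show (∑ j : Fin n, if (j:ℕ) = (i:ℕ) then (if (i:ℕ)+1 = m then zm else if (i:ℕ)+1 = n+1-m then zmb else 0) * V ((j:ℕ)+1) else 0)
      = if (i:ℕ) < n then (if (i:ℕ)+1 = m then zm else if (i:ℕ)+1 = n+1-m then zmb else 0) * V ((i:ℕ)+1) else 0
      from sum_ite_fin (i:ℕ) (fun x => (if (i:ℕ)+1 = m then zm else if (i:ℕ)+1 = n+1-m then zmb else 0) * V (x+1))]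
  rw [show (∑ j : Fin n, if (j:ℕ) = (i:ℕ)+1 then (t:ℂ) * V ((j:ℕ)+1) else 0)
      = if (i:ℕ)+1 < n then (t:ℂ) * V ((i:ℕ)+1+1) else 0
      from sum_ite_fin ((i:ℕ)+1) (fun x => (t:ℂ) * V (x+1))]
  rw [show (∑ j : Fin n, if (j:ℕ)+1 = (i:ℕ) then (t:ℂ) * V ((j:ℕ)+1) else 0)
      = if (i:ℕ)-1 < n ∧ 1 ≤ (i:ℕ) then (t:ℂ) * V ((i:ℕ)-1+1) else 0
      from sum_ite_fin' (i:ℕ) (fun x => (t:ℂ) * V (x+1))]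
  rw [if_pos i.isLt]
  have e2 : (if (i:ℕ)+1 < n then (t:ℂ) * V ((i:ℕ)+1+1) else 0) = (t:ℂ) * V ((i:ℕ)+2) := by
    split
    · rfl
    · rw [show (i:ℕ)+2 = n+1 by (have := i.isLt; omega), hVn]
      ring
  have e3 : (if (i:ℕ)-1 < n ∧ 1 ≤ (i:ℕ) then (t:ℂ) * V ((i:ℕ)-1+1) else 0) = (t:ℂ) * V (i:ℕ) := by
    split
    · next h => rw [show (i:ℕ)-1+1 = (i:ℕ) by omega]
    · next h =>
        rw [show (i:ℕ) = 0 by (have := i.isLt; omega), hV0]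
        ring
  rw [e2, e3]
  ring

noncomputable def Sc (θ : ℝ) (j : ℕ) : ℂ := ((Real.sin (θ * j) : ℝ) : ℂ)

noncomputable def Uc (θ : ℝ) (p : ℕ) (e : ℂ) (j : ℕ) : ℂ :=
  if p ≤ j then e * Sc θ (j - p) else 0

lemma Sc_zero (θ : ℝ) : Sc θ 0 = 0 := by simp [Sc]

lemma Sc_one (θ : ℝ) : Sc θ 1 = ((Real.sin θ : ℝ) : ℂ) := by simp [Sc]

lemma Sc_rec (θ : ℝ) (j : ℕ) :
    Sc θ j + Sc θ (j+2) = 2 * ((Real.cos θ : ℝ) : ℂ) * Sc θ (j+1) := by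
  have h : Real.sin (θ * j) + Real.sin (θ * (j+2)) = 2 * Real.cos θ * Real.sin (θ * (j+1)) := by
    have e1 : θ * ((j:ℝ)+2) = θ * ((j:ℝ)+1) + θ := by ring
    have e2 : θ * (j:ℝ) = θ * ((j:ℝ)+1) - θ := by ring
    rw [e1, e2, Real.sin_add, Real.sin_sub]
    ring
  simp only [Sc]
  push_cast
  exact_mod_cast congrArg (fun x : ℝ => (x : ℂ)) h

lemma Sc_rec' (θ : ℝ) (s : ℕ) (hs : 1 ≤ s) :
    Sc θ (s-1) + Sc θ (s+1) = 2 * ((Real.cos θ : ℝ) : ℂ) * Sc θ s := by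
  have := Sc_rec θ (s-1)
  rwa [show s-1+2 = s+1 by omega, show s-1+1 = s by omega] at this

lemma Uc_rec (θ : ℝ) (p : ℕ) (e : ℂ) (hp : 1 ≤ p) (s : ℕ) (hs : 1 ≤ s) (hsp : s ≠ p) :
    Uc θ p e (s-1) + Uc θ p e (s+1) = 2 * ((Real.cos θ : ℝ) : ℂ) * Uc θ p e s := by
  by_cases hj : p ≤ s - 1
  · rw [Uc, Uc, Uc, if_pos hj, if_pos (by omega), if_pos (by omega)]
    have h := Sc_rec θ (s - 1 - p)
    rw [show s-1-p+2 = s+1-p by omega, show s-1-p+1 = s-p by omega] at h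
    calc e * Sc θ (s-1-p) + e * Sc θ (s+1-p) = e * (Sc θ (s-1-p) + Sc θ (s+1-p)) := by ring
      _ = e * (2 * ((Real.cos θ : ℝ) : ℂ) * Sc θ (s-p)) := by rw [h]
      _ = 2 * ((Real.cos θ : ℝ) : ℂ) * (e * Sc θ (s-p)) := by ring
  · rw [Uc, Uc, Uc, if_neg hj]
    by_cases hj2 : s + 1 = p
    · rw [if_pos (by omega), if_neg (by omega), show s+1-p = 0 by omega, Sc_zero]
      ring
    · rw [if_neg (by omega), if_neg (by omega)]
      ring

lemma Uc_at (θ : ℝ) (p : ℕ) (e : ℂ) (hp : 1 ≤ p) :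
    Uc θ p e (p-1) + Uc θ p e (p+1) =
      2 * ((Real.cos θ : ℝ) : ℂ) * Uc θ p e p + e * ((Real.sin θ : ℝ) : ℂ) := by
  rw [Uc, Uc, Uc, if_neg (by omega), if_pos (by omega), if_pos (le_refl p),
    show p+1-p = 1 by omega, Nat.sub_self, Sc_zero, Sc_one]
  ring

lemma master (n m : ℕ) (hn : 2 ≤ n) (hm : 1 ≤ m) (hmn : 2*m ≤ n)
    (t : ℝ) (ht : 0 < t) (zm zmb : ℂ) (θ : ℝ)
    (h1 : Real.sin θ ≠ 0) (hN : Real.sin (θ * ((n+1 : ℕ) : ℝ)) = 0)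
    (hcase : Real.sin (θ * ((m : ℕ) : ℝ)) = 0 ∨
      (zmb = -zm ∧ Real.sin (θ * ((2*m : ℕ) : ℝ)) = 0)) :
    ((2 * t * Real.cos θ : ℝ) : ℂ) ∈ spectrum ℂ (Hu n m t zm zmb) := by
  set mb := n + 1 - m with hmb
  have hmlt : m < mb := by omega
  have hmb1 : 1 ≤ mb := by omega
  have hmbn : mb ≤ n := by omega
  have hts0 : (t : ℂ) * ((Real.sin θ : ℝ) : ℂ) ≠ 0 :=
    mul_ne_zero (by exact_mod_cast ne_of_gt ht) (by exact_mod_cast h1)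
  set c : ℂ := -zm * Sc θ m / ((t : ℂ) * ((Real.sin θ : ℝ) : ℂ)) with hc
  set d : ℂ := -zmb * (Sc θ mb + c * Sc θ (mb - m)) / ((t : ℂ) * ((Real.sin θ : ℝ) : ℂ)) with hd
  set W : ℕ → ℂ := fun j => Sc θ j + Uc θ m c j + Uc θ mb d j with hW
  have hresc : (t : ℂ) * ((Real.sin θ : ℝ) : ℂ) * c = -zm * Sc θ m := by
    rw [hc]; exact mul_div_cancel₀ _ hts0
  have hresd : (t : ℂ) * ((Real.sin θ : ℝ) : ℂ) * d =
      -zmb * (Sc θ mb + c * Sc θ (mb - m)) := by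
    rw [hd]; exact mul_div_cancel₀ _ hts0
  have hSN : Sc θ (n+1) = 0 := by
    simp only [Sc]
    exact_mod_cast congrArg (fun x : ℝ => (x : ℂ)) hN
  have hUmm : Uc θ m c m = 0 := by rw [Uc, if_pos (le_refl m), Nat.sub_self, Sc_zero]; ring
  have hUmbm : Uc θ mb d m = 0 := by rw [Uc, if_neg (by omega)]
  have hUmmb : Uc θ m c mb = c * Sc θ (mb - m) := by rw [Uc, if_pos (by omega)]
  have hUmbmb : Uc θ mb d mb = 0 := by
    rw [Uc, if_pos (le_refl mb), Nat.sub_self, Sc_zero]; ring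
  have hV0 : W 0 = 0 := by
    rw [hW]
    simp only
    rw [Sc_zero, Uc, Uc, if_neg (by omega), if_neg (by omega)]
    ring
  -- boundary fact
  have hbd : c * Sc θ mb + d * Sc θ m = 0 := by
    rcases hcase with hSm | ⟨hzb, h2m⟩
    · have hSm' : Sc θ m = 0 := by
        simp only [Sc]
        exact_mod_cast congrArg (fun x : ℝ => (x : ℂ)) hSm
      have hc0 : c = 0 := by rw [hc, hSm']; simp
      rw [hc0, hSm']; ring
    · have hcast : ((mb : ℕ) : ℝ) = ((n+1 : ℕ) : ℝ) - ((m : ℕ) : ℝ) := by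
        rw [hmb]; push_cast [Nat.cast_sub (by omega : m ≤ n+1)]; ring
      have hScmb : Sc θ mb =
          -(((Real.cos (θ * ((n+1:ℕ):ℝ)) : ℝ) : ℂ) * ((Real.sin (θ * ((m:ℕ):ℝ)) : ℝ) : ℂ)) := by
        simp only [Sc]
        rw [hcast, show θ * (((n+1:ℕ):ℝ) - ((m:ℕ):ℝ)) = θ * ((n+1:ℕ):ℝ) - θ * ((m:ℕ):ℝ) by ring,
          Real.sin_sub, hN]
        push_cast
        ring
      have hScmbm : Sc θ (mb - m) = 0 := by
        simp only [Sc]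
        have hcast2 : ((mb - m : ℕ) : ℝ) = ((n+1 : ℕ) : ℝ) - ((2*m : ℕ) : ℝ) := by
          rw [hmb]; push_cast [Nat.cast_sub (by omega : m ≤ n+1-m), Nat.cast_sub (by omega : m ≤ n+1)]; ring
        rw [hcast2, show θ * (((n+1:ℕ):ℝ) - ((2*m:ℕ):ℝ)) = θ * ((n+1:ℕ):ℝ) - θ * ((2*m:ℕ):ℝ) by ring,
          Real.sin_sub, hN, h2m]
        norm_num
      have hSm' : Sc θ m = ((Real.sin (θ * ((m:ℕ):ℝ)) : ℝ) : ℂ) := by simp only [Sc]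
      have hd' : d = ((Real.cos (θ * ((n+1:ℕ):ℝ)) : ℝ) : ℂ) * c := by
        rw [hd, hzb, hScmbm, hScmb, hc, hSm', mul_zero, add_zero]
        ring
      rw [hd', hSm', hScmb]
      ring
  have hVN : W (n+1) = 0 := by
    rw [hW]
    simp only
    rw [hSN, Uc, Uc, if_pos (by omega : m ≤ n+1), if_pos (by omega : mb ≤ n+1),
      show n+1-mb = m by omega]
    have : n + 1 - m = mb := by omega
    rw [this]
    linear_combination hbd
  have hμ : ((2 * t * Real.cos θ : ℝ) : ℂ) = 2 * (t:ℂ) * ((Real.cos θ : ℝ) : ℂ) := by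
    push_cast; ring
  have hsite : ∀ s : ℕ, 1 ≤ s → s ≤ n →
      (t:ℂ) * W (s-1) + (t:ℂ) * W (s+1) +
        (if s = m then zm else if s = n + 1 - m then zmb else 0) * W s
      = ((2 * t * Real.cos θ : ℝ) : ℂ) * W s := by
    intro s hs1 hsn
    rw [hμ, hW]
    simp only
    by_cases hsm : s = m
    · subst hsm
      rw [if_pos rfl]
      have e1 := Sc_rec' θ s hs1
      have e2 := Uc_at θ s c hs1
      have e3 := Uc_rec θ mb d hmb1 s hs1 (by omega)
      rw [hUmm] at e2 ⊢
      rw [hUmbm] at e3 ⊢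
      linear_combination (t:ℂ) * e1 + (t:ℂ) * e2 + (t:ℂ) * e3 + hresc
    · rw [if_neg hsm]
      by_cases hsmb : s = mb
      · rw [hsmb, if_pos (by omega)]
        have e1 := Sc_rec' θ mb hmb1
        have e2 := Uc_rec θ m c hm mb hmb1 (by omega)
        have e3 := Uc_at θ mb d hmb1
        rw [hUmbmb] at e3 ⊢
        rw [hUmmb] at e2 ⊢
        linear_combination (t:ℂ) * e1 + (t:ℂ) * e2 + (t:ℂ) * e3 + hresd
      · rw [if_neg (by omega)]
        have e1 := Sc_rec' θ s hs1
        have e2 := Uc_rec θ m c hm s hs1 hsm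
        have e3 := Uc_rec θ mb d hmb1 s hs1 hsmb
        linear_combination (t:ℂ) * e1 + (t:ℂ) * e2 + (t:ℂ) * e3
  apply mem_spectrum_of_eigvec _ _ (fun j : Fin n => W ((j:ℕ)+1))
  · intro h0
    have h01 := congrFun h0 (⟨0, by omega⟩ : Fin n)
    simp only [Pi.zero_apply] at h01
    rw [hW] at h01
    simp only at h01
    rw [Uc, Uc, if_neg (by omega : ¬ mb ≤ 0 + 1)] at h01
    have hU1 : (if m ≤ 0 + 1 then c * Sc θ (0 + 1 - m) else 0) = 0 := by
      split
      · rw [show 0 + 1 - m = 0 by omega, Sc_zero]; ring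
      · rfl
    rw [hU1, Sc_one, add_zero, add_zero] at h01
    exact h1 (by exact_mod_cast h01)
  · funext i
    rw [Hu_mulVec n m t zm zmb W hV0 hVN i]
    have := hsite ((i:ℕ)+1) (by omega) (by omega)
    simp only [Pi.smul_apply, smul_eq_mul]
    exact this

lemma sin_theta_mul (k G M : ℕ) (hG : 0 < G) (hdvd : G ∣ M) :
    Real.sin ((Real.pi * k / G) * ((M : ℕ) : ℝ)) = 0 := by
  obtain ⟨p, hp⟩ := hdvd
  have hG' : (G : ℝ) ≠ 0 := by exact_mod_cast hG.ne'
  have : (Real.pi * k / G) * ((M : ℕ) : ℝ) = ((k * p : ℕ) : ℝ) * Real.pi := by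
    subst hp
    push_cast
    field_simp
  rw [this]
  exact Real.sin_nat_mul_pi _

theorem stmt13 (n m : ℕ) (hn : 2 ≤ n) (hm : 1 ≤ m) (hmn : 2*m ≤ n)
    (t : ℝ) (ht : 0 < t) :
    (∀ zm zmb : ℂ, ∀ k : ℕ, 1 ≤ k → k ≤ Nat.gcd m (n + 1) - 1 →
      ((2 * t * Real.cos (Real.pi * k / (Nat.gcd m (n + 1))) : ℝ) : ℂ)
        ∈ spectrum ℂ (Hu n m t zm zmb)) ∧
    (∀ zm : ℂ, ∀ k : ℕ, 1 ≤ k → k ≤ Nat.gcd (2*m) (n + 1) - 1 →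
      ((2 * t * Real.cos (Real.pi * k / (Nat.gcd (2*m) (n + 1))) : ℝ) : ℂ)
        ∈ spectrum ℂ (Hu n m t zm (-zm))) := by
  constructor
  · intro zm zmb k hk1 hk2
    have hGpos : 0 < Nat.gcd m (n+1) := Nat.gcd_pos_of_pos_right m (by omega)
    have hG2 : 2 ≤ Nat.gcd m (n+1) := by omega
    have hkG : k < Nat.gcd m (n+1) := by omega
    apply master n m hn hm hmn t ht zm zmb (Real.pi * k / (Nat.gcd m (n+1)))
    · apply ne_of_gt
      apply Real.sin_pos_of_pos_of_lt_pi
      · apply div_pos (mul_pos Real.pi_pos (by exact_mod_cast Nat.pos_of_ne_zero (by omega)))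
        exact_mod_cast hGpos
      · rw [div_lt_iff₀ (by exact_mod_cast hGpos)]
        have hkr : (k : ℝ) < (Nat.gcd m (n+1) : ℝ) := by exact_mod_cast hkG
        nlinarith [Real.pi_pos]
    · exact sin_theta_mul k _ (n+1) hGpos (Nat.gcd_dvd_right _ _)
    · exact Or.inl (sin_theta_mul k _ m hGpos (Nat.gcd_dvd_left _ _))
  · intro zm k hk1 hk2
    have hGpos : 0 < Nat.gcd (2*m) (n+1) := Nat.gcd_pos_of_pos_right (2*m) (by omega)
    have hG2 : 2 ≤ Nat.gcd (2*m) (n+1) := by omega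
    have hkG : k < Nat.gcd (2*m) (n+1) := by omega
    apply master n m hn hm hmn t ht zm (-zm) (Real.pi * k / (Nat.gcd (2*m) (n+1)))
    · apply ne_of_gt
      apply Real.sin_pos_of_pos_of_lt_pi
      · apply div_pos (mul_pos Real.pi_pos (by exact_mod_cast Nat.pos_of_ne_zero (by omega)))
        exact_mod_cast hGpos
      · rw [div_lt_iff₀ (by exact_mod_cast hGpos)]
        have hkr : (k : ℝ) < (Nat.gcd (2*m) (n+1) : ℝ) := by exact_mod_cast hkG
        nlinarith [Real.pi_pos]
    · exact sin_theta_mul k _ (n+1) hGpos (Nat.gcd_dvd_right _ _)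
    · exact Or.inr ⟨rfl, sin_theta_mul k _ (2*m) hGpos (Nat.gcd_dvd_left _ _)⟩
end

section
/- Suppose n = 2k with k ≥ 2. Then for all λ ∈ ℂ, (t_1 t_2)^{−k}·det(λ·1_n − H) = U_k(Q) + ((z_1 z_n − t_L t_R)/t_2²)·U_{k−2}(Q) + ((t_2² − λ(z_1 + z_n) + z_1 z_n − t_L t_R)/(t_1 t_2))·U_{k−1}(Q) − (t_L + t_R)/t_2. -/
open Matrix Complex Polynomial

/-- The `n`-site SSH chain with alternating hoppings `t1` (odd bonds) and `t2`
(even bonds), defect potentials `z1`, `zn` at the two ends, and corner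
entries `tL` (top-right) and `tR` (bottom-left). -/
noncomputable def Hssh (n : ℕ) (t1 t2 : ℝ) (z1 zn tL tR : ℂ) :
    Matrix (Fin n) (Fin n) ℂ :=
  fun i j =>
    if (i : ℕ) = (j : ℕ) then
      (if (i : ℕ) = 0 then z1 else if (i : ℕ) = n - 1 then zn else 0)
    else if (i : ℕ) + 1 = (j : ℕ) then
      (if (i : ℕ) % 2 = 0 then (t1 : ℂ) else (t2 : ℂ))
    else if (j : ℕ) + 1 = (i : ℕ) then
      (if (j : ℕ) % 2 = 0 then (t1 : ℂ) else (t2 : ℂ))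
    else if (i : ℕ) = 0 ∧ (j : ℕ) = n - 1 then tL
    else if (i : ℕ) = n - 1 ∧ (j : ℕ) = 0 then tR
    else 0

noncomputable def tri (d e : ℕ → ℂ) (m : ℕ) : Matrix (Fin m) (Fin m) ℂ :=
  Matrix.of fun i j =>
    if (i:ℕ) = (j:ℕ) then d i else if (i:ℕ)+1 = (j:ℕ) then e i
    else if (j:ℕ)+1 = (i:ℕ) then e j else 0

lemma tri_cast (d e : ℕ → ℂ) (m : ℕ) :
    (tri d e (m+1)).submatrix Fin.castSucc Fin.castSucc = tri d e m := by
  ext i j; simp [tri]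

lemma tri_succ (d e : ℕ → ℂ) (m : ℕ) :
    (tri d e (m+1)).submatrix Fin.succ Fin.succ = tri (fun i => d (i+1)) (fun i => e (i+1)) m := by
  ext i j
  simp only [tri, submatrix_apply, of_apply, Fin.val_succ]
  rcases lt_trichotomy (i:ℕ) (j:ℕ) with h | h | h <;>
    · split_ifs <;> first | rfl | omega | (exfalso; omega) | (congr 1; omega)

lemma det_updateRow_single {m : ℕ} (A : Matrix (Fin (m+1)) (Fin (m+1)) ℂ)
    (i j : Fin (m+1)) (c : ℂ) :
    Matrix.det (A.updateRow i (Pi.single j c)) =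
      c * (-1)^((i:ℕ)+(j:ℕ)) * Matrix.det (A.submatrix i.succAbove j.succAbove) := by
  rw [Matrix.det_succ_row _ i]
  rw [Finset.sum_eq_single j]
  · have hsub : (A.updateRow i (Pi.single j c)).submatrix i.succAbove j.succAbove
        = A.submatrix i.succAbove j.succAbove := by
      ext a b
      simp [Matrix.updateRow_ne (Fin.succAbove_ne i a)]
    rw [hsub, Matrix.updateRow_self]
    rw [Pi.single_eq_same]; ring
  · intro b _ hb
    rw [Matrix.updateRow_self]
    simp [Pi.single_eq_of_ne hb]
  · simp

lemma tri_det_rec (d e : ℕ → ℂ) (m : ℕ) :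
    Matrix.det (tri d e (m+2)) =
      d 0 * Matrix.det (tri (fun i => d (i+1)) (fun i => e (i+1)) (m+1))
        - e 0 * e 0 * Matrix.det (tri (fun i => d (i+2)) (fun i => e (i+2)) m) := by
  have hv0 : ((((0:Fin (m+1)).succ).succAbove 0 : Fin (m+2)) : ℕ) = 0 := by
    simp [Fin.succAbove, Fin.lt_def]
  have hv : ∀ j : Fin m, ((((0:Fin (m+1)).succ).succAbove j.succ : Fin (m+2)) : ℕ) = (j:ℕ)+2 := by
    intro j
    simp [Fin.succAbove, Fin.lt_def]
  rw [Matrix.det_succ_row_zero, Fin.sum_univ_succ, Fin.sum_univ_succ]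
  have h2 : ∀ j : Fin m, ((tri d e (m+2)) 0 j.succ.succ) = 0 := by
    intro j
    simp only [tri, of_apply, Fin.val_succ, Fin.val_zero]
    split_ifs <;> first | rfl | omega | tauto
  rw [Finset.sum_eq_zero (fun j _ => by rw [h2 j]; ring)]
  have hA00 : (tri d e (m+2)) 0 0 = d 0 := by simp [tri]
  have hA01 : (tri d e (m+2)) 0 ((0:Fin (m+1)).succ) = e 0 := by
    simp [tri, Fin.val_succ]
  have hsub0 : (tri d e (m+2)).submatrix Fin.succ ((0:Fin (m+2)).succAbove)
      = tri (fun i => d (i+1)) (fun i => e (i+1)) (m+1) := by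
    rw [Fin.succAbove_zero]; exact tri_succ d e (m+1)
  set B := (tri d e (m+2)).submatrix Fin.succ (((0:Fin (m+1)).succ : Fin (m+2)).succAbove) with hB
  have hB0 : ∀ i : Fin m, B i.succ 0 = 0 := by
    intro i
    simp only [hB, submatrix_apply, tri, of_apply, hv0, Fin.val_succ]
    split_ifs <;> first | rfl | omega | tauto
  have hBsub : B.submatrix Fin.succ Fin.succ = tri (fun i => d (i+2)) (fun i => e (i+2)) m := by
    ext i j
    simp only [hB, submatrix_apply, tri, of_apply, hv j, Fin.val_succ]
    rcases lt_trichotomy (i:ℕ) (j:ℕ) with h | h | h <;>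
      · split_ifs <;> first | rfl | omega | tauto | (congr 1; omega)
  have hB00 : B 0 0 = e 0 := by
    simp only [hB, submatrix_apply, tri, of_apply, hv0, Fin.val_succ, Fin.val_zero]
    norm_num
  have hdetB : Matrix.det B = e 0 * Matrix.det (tri (fun i => d (i+2)) (fun i => e (i+2)) m) := by
    rw [Matrix.det_succ_column_zero, Fin.sum_univ_succ]
    rw [Finset.sum_eq_zero (fun i _ => by rw [hB0 i]; ring)]
    rw [Fin.succAbove_zero, hBsub, hB00]
    simp
  rw [hA00, hA01, hsub0, hdetB]
  simp [Fin.val_succ]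
  ring

lemma updateRow_comm' {m : ℕ} (A : Matrix (Fin m) (Fin m) ℂ) {i j : Fin m} (h : i ≠ j)
    (u v : Fin m → ℂ) :
    (A.updateRow i u).updateRow j v = (A.updateRow j v).updateRow i u := by
  ext a b
  by_cases ha : a = j <;> by_cases ha' : a = i <;>
    simp_all [Matrix.updateRow_apply]

lemma submatrix_updateRow_succ {m : ℕ} (A : Matrix (Fin (m+1)) (Fin (m+1)) ℂ)
    (v : Fin (m+1) → ℂ) (g : Fin m → Fin (m+1)) :
    ((A.updateRow 0 v).submatrix Fin.succ g) = A.submatrix Fin.succ g := by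
  ext a b
  simp [Matrix.submatrix_apply, Matrix.updateRow_ne (Fin.succ_ne_zero a)]

lemma submatrix_updateRow_castSucc {m : ℕ} (A : Matrix (Fin (m+2)) (Fin (m+2)) ℂ)
    (v : Fin (m+2) → ℂ) (g : Fin (m+1) → Fin (m+2)) :
    ((A.updateRow 0 v).submatrix Fin.castSucc g) =
      (A.submatrix Fin.castSucc g).updateRow 0 (v ∘ g) := by
  ext a b
  by_cases ha : a = 0
  · subst ha
    simp [Matrix.updateRow_self]
  · have h1 : (Fin.castSucc a) ≠ 0 := by
      intro hh; apply ha; apply Fin.ext; have h2 := congrArg Fin.val hh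
      simp only [Fin.coe_castSucc, Fin.val_zero] at h2 ⊢; exact h2
    rw [Matrix.submatrix_apply, Matrix.updateRow_ne h1, Matrix.updateRow_ne ha]
    rfl

lemma det_tri_low (d e : ℕ → ℂ) (m : ℕ) :
    Matrix.det ((tri d e (m+1)).submatrix Fin.castSucc Fin.succ) = ∏ i : Fin m, e i := by
  rw [Matrix.det_of_lowerTriangular]
  · apply Finset.prod_congr rfl
    intro i _
    simp only [submatrix_apply, tri, of_apply, Fin.val_succ, Fin.coe_castSucc]
    split_ifs <;> first | rfl | omega | tauto
  · intro i j hij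
    have : (i:ℕ) < (j:ℕ) := hij
    simp only [submatrix_apply, tri, of_apply, Fin.val_succ, Fin.coe_castSucc]
    split_ifs <;> first | rfl | omega | tauto

lemma det_tri_up (d e : ℕ → ℂ) (m : ℕ) :
    Matrix.det ((tri d e (m+1)).submatrix Fin.succ Fin.castSucc) = ∏ i : Fin m, e i := by
  rw [Matrix.det_of_upperTriangular]
  · apply Finset.prod_congr rfl
    intro i _
    simp only [submatrix_apply, tri, of_apply, Fin.val_succ, Fin.coe_castSucc]
    split_ifs <;> first | rfl | omega | tauto
  · intro i j hij
    have : (j:ℕ) < (i:ℕ) := hij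
    simp only [submatrix_apply, tri, of_apply, Fin.val_succ, Fin.coe_castSucc]
    split_ifs <;> first | rfl | omega | tauto

lemma tri_mid (d e : ℕ → ℂ) (m : ℕ) :
    ((tri d e (m+2)).submatrix Fin.castSucc Fin.succ).submatrix Fin.succ Fin.castSucc
      = tri (fun i => d (i+1)) (fun i => e (i+1)) m := by
  ext i j
  simp only [submatrix_apply, tri, of_apply, Fin.val_succ, Fin.coe_castSucc]
  rcases lt_trichotomy (i:ℕ) (j:ℕ) with h | h | h <;>
    · split_ifs <;> first | rfl | omega | tauto | (congr 1; omega)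

lemma single_comp_castSucc0 (m : ℕ) :
    (Pi.single (0 : Fin (m+2)) (1:ℂ)) ∘ Fin.castSucc = Pi.single (0 : Fin (m+1)) 1 := by
  funext j
  simp only [Function.comp_apply, Pi.single_apply, Fin.ext_iff, Fin.coe_castSucc, Fin.val_zero]

lemma single_comp_castSuccLast (m : ℕ) :
    (Pi.single (Fin.last (m+1)) (1:ℂ)) ∘ Fin.castSucc = 0 := by
  funext j
  simp only [Function.comp_apply, Pi.single_apply, Fin.ext_iff, Fin.coe_castSucc, Fin.val_last,
    Pi.zero_apply]
  rw [if_neg (by omega)]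

lemma single_comp_succLast (m : ℕ) :
    (Pi.single (Fin.last (m+1)) (1:ℂ)) ∘ Fin.succ = Pi.single (Fin.last m) 1 := by
  funext j
  simp only [Function.comp_apply, Pi.single_apply, Fin.ext_iff, Fin.val_succ, Fin.val_last]
  by_cases h : (j:ℕ) = m
  · simp [h]
  · rw [if_neg (by omega), if_neg h]

lemma det_corner (d e : ℕ → ℂ) (m : ℕ) (z1 zn tL tR : ℂ) :
    Matrix.det (((tri d e (m+2)).updateRow (Fin.last (m+1))
        ((tri d e (m+2)) (Fin.last (m+1)) + (-zn) • (Pi.single (Fin.last (m+1)) 1 : Fin (m+2) → ℂ)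
          + (-tR) • (Pi.single 0 1 : Fin (m+2) → ℂ))).updateRow 0
        ((tri d e (m+2)) 0 + (-z1) • (Pi.single 0 1 : Fin (m+2) → ℂ)
          + (-tL) • (Pi.single (Fin.last (m+1)) 1 : Fin (m+2) → ℂ)))
      = Matrix.det (tri d e (m+2)) - zn * Matrix.det (tri d e (m+1))
        - z1 * Matrix.det (tri (fun i => d (i+1)) (fun i => e (i+1)) (m+1))
        + (z1*zn - tL*tR) * Matrix.det (tri (fun i => d (i+1)) (fun i => e (i+1)) m)
        - (tL + tR) * ((-1)^(m+1) * ∏ i : Fin (m+1), e i) := by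
  set T := tri d e (m+2) with hT
  set l : Fin (m+2) := Fin.last (m+1) with hl
  have h0l : (0 : Fin (m+2)) ≠ l := by
    simp [hl, Fin.ext_iff]
  set rl : Fin (m+2) → ℂ := T l + (-zn) • (Pi.single l 1 : Fin (m+2) → ℂ)
      + (-tR) • (Pi.single 0 1 : Fin (m+2) → ℂ) with hrl
  have key : ∀ v : Fin (m+2) → ℂ,
      (T.updateRow l rl).updateRow 0 v = ((T.updateRow 0 v).updateRow l rl) :=
    fun v => updateRow_comm' T (Ne.symm h0l) rl v
  rw [Matrix.det_updateRow_add, Matrix.det_updateRow_add, Matrix.det_updateRow_smul,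
    Matrix.det_updateRow_smul]
  have hT0 : (T.updateRow l rl) 0 = T 0 := Matrix.updateRow_ne h0l
  rw [show (T.updateRow l rl).updateRow 0 (T 0) = T.updateRow l rl from by
    rw [← hT0]; exact Matrix.updateRow_eq_self _ _]
  rw [key (Pi.single 0 1), key (Pi.single l 1)]
  have splitl : ∀ (Y : Matrix (Fin (m+2)) (Fin (m+2)) ℂ),
      Matrix.det (Y.updateRow l rl) = Matrix.det (Y.updateRow l (T l))
        + (-zn) * Matrix.det (Y.updateRow l ((Pi.single l 1 : Fin (m+2) → ℂ)))
        + (-tR) * Matrix.det (Y.updateRow l ((Pi.single 0 1 : Fin (m+2) → ℂ))) := by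
    intro Y
    rw [hrl, Matrix.det_updateRow_add, Matrix.det_updateRow_add, Matrix.det_updateRow_smul,
      Matrix.det_updateRow_smul]
  rw [splitl, splitl, splitl]
  have hcast : T.submatrix Fin.castSucc Fin.castSucc = tri d e (m+1) := tri_cast d e (m+1)
  have hsucc : T.submatrix Fin.succ Fin.succ = tri (fun i => d (i+1)) (fun i => e (i+1)) (m+1) :=
    tri_succ d e (m+1)
  have hvl : ((l : Fin (m+2)) : ℕ) = m+1 := Fin.val_last (m+1)
  have hv0 : ((0 : Fin (m+2)) : ℕ) = 0 := rfl
  have hsal : (l : Fin (m+2)).succAbove = Fin.castSucc := Fin.succAbove_last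
  have hsa0 : (0 : Fin (m+2)).succAbove = Fin.succ := Fin.succAbove_zero
  have heven : ((-1:ℂ))^((m+1)+(m+1)) = 1 := Even.neg_one_pow ⟨m+1, rfl⟩
  -- the nine determinants
  have h1 : T.updateRow l (T l) = T := Matrix.updateRow_eq_self _ _
  have h2 : Matrix.det (T.updateRow l (Pi.single l 1)) = Matrix.det (tri d e (m+1)) := by
    rw [det_updateRow_single, hvl, hsal, hcast, heven, one_mul, one_mul]
  have h3 : Matrix.det (T.updateRow l (Pi.single 0 1)) =
      (-1:ℂ)^(m+1) * ∏ i : Fin (m+1), e i := by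
    rw [det_updateRow_single, hvl, hv0, hsal, hsa0]
    have hd : Matrix.det (T.submatrix Fin.castSucc Fin.succ) = ∏ i : Fin (m+1), e i :=
      det_tri_low d e (m+1)
    rw [hd]; norm_num
  set B := T.updateRow 0 (Pi.single 0 1 : Fin (m+2) → ℂ) with hBdef
  have hBl : B l = T l := Matrix.updateRow_ne (Ne.symm h0l)
  have h4 : B.updateRow l (T l) = B := by rw [← hBl]; exact Matrix.updateRow_eq_self _ _
  have h4' : Matrix.det B =
      Matrix.det (tri (fun i => d (i+1)) (fun i => e (i+1)) (m+1)) := by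
    rw [hBdef, det_updateRow_single, hv0, hsa0, hsucc]
    norm_num
  have h5 : Matrix.det (B.updateRow l (Pi.single l 1)) =
      Matrix.det (tri (fun i => d (i+1)) (fun i => e (i+1)) m) := by
    rw [det_updateRow_single, hvl, hsal, heven, one_mul, one_mul]
    rw [hBdef, submatrix_updateRow_castSucc, hcast, single_comp_castSucc0]
    rw [det_updateRow_single, Fin.succAbove_zero, tri_succ]
    norm_num
  have h6 : Matrix.det (B.updateRow l (Pi.single 0 1)) = 0 := by
    apply Matrix.det_zero_of_row_eq h0l
    rw [Matrix.updateRow_ne h0l, Matrix.updateRow_self, hBdef, Matrix.updateRow_self]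
  set C := T.updateRow 0 (Pi.single l 1 : Fin (m+2) → ℂ) with hCdef
  have hCl : C l = T l := Matrix.updateRow_ne (Ne.symm h0l)
  have h7 : C.updateRow l (T l) = C := by rw [← hCl]; exact Matrix.updateRow_eq_self _ _
  have h7' : Matrix.det C = (-1:ℂ)^(m+1) * ∏ i : Fin (m+1), e i := by
    rw [hCdef, det_updateRow_single, hv0, hvl, hsa0, hsal]
    have hd : Matrix.det (T.submatrix Fin.succ Fin.castSucc) = ∏ i : Fin (m+1), e i :=
      det_tri_up d e (m+1)
    rw [hd]; norm_num
  have h8 : Matrix.det (C.updateRow l (Pi.single l 1)) = 0 := by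
    rw [det_updateRow_single, hvl, hsal, heven, one_mul, one_mul]
    rw [hCdef, submatrix_updateRow_castSucc, single_comp_castSuccLast]
    exact Matrix.det_eq_zero_of_row_eq_zero 0 (fun j => by rw [Matrix.updateRow_self]; rfl)
  have h9 : Matrix.det (C.updateRow l (Pi.single 0 1)) =
      - Matrix.det (tri (fun i => d (i+1)) (fun i => e (i+1)) m) := by
    rw [det_updateRow_single, hvl, hv0, hsal, hsa0]
    have hCs : C.submatrix Fin.castSucc Fin.succ
        = (T.submatrix Fin.castSucc Fin.succ).updateRow 0 (Pi.single (Fin.last m) 1) := by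
      show (T.updateRow 0 (Pi.single (Fin.last (m+1)) 1)).submatrix Fin.castSucc Fin.succ = _
      rw [submatrix_updateRow_castSucc, single_comp_succLast]
    rw [hCs, det_updateRow_single]
    rw [show ((0 : Fin (m+1)) : ℕ) = 0 from rfl, show ((Fin.last m : Fin (m+1)) : ℕ) = m from rfl,
      Fin.succAbove_zero, Fin.succAbove_last]
    have hmid : ((T.submatrix Fin.castSucc Fin.succ).submatrix Fin.succ Fin.castSucc)
        = tri (fun i => d (i+1)) (fun i => e (i+1)) m := tri_mid d e m
    rw [hmid]
    have hsign : ((-1:ℂ))^(m+1+0) * ((-1:ℂ))^(0+m) = -1 := by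
      rw [← pow_add]; exact Odd.neg_one_pow ⟨m, by omega⟩
    linear_combination Matrix.det (tri (fun i => d (i+1)) (fun i => e (i+1)) m) * hsign
  rw [h1, h4, h7, h2, h3, h4', h5, h6, h7', h8, h9]
  ring

def tseq (a b : ℂ) : ℕ → ℂ := fun j => if j % 2 = 0 then a else b

lemma tseq_shift (a b : ℂ) : (fun i => tseq a b (i+1)) = tseq b a := by
  funext j
  simp only [tseq]
  rcases Nat.mod_two_eq_zero_or_one j with h | h <;> simp [Nat.add_mod, h]

lemma tseq_shift2 (a b : ℂ) : (fun i => tseq a b (i+2)) = tseq a b := by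
  funext j
  simp only [tseq]
  rcases Nat.mod_two_eq_zero_or_one j with h | h <;> simp [Nat.add_mod, h]

noncomputable def EE (lam a b : ℂ) (m : ℕ) : ℂ :=
  Matrix.det (tri (fun _ => lam) (tseq (-a) (-b)) m)

lemma EE_rec (lam a b : ℂ) (m : ℕ) :
    EE lam a b (m+2) = lam * EE lam b a (m+1) - a^2 * EE lam a b m := by
  unfold EE
  rw [tri_det_rec]
  rw [show (fun i => tseq (-a) (-b) (i+1)) = tseq (-b) (-a) from tseq_shift _ _]
  rw [show (fun i => tseq (-a) (-b) (i+2)) = tseq (-a) (-b) from tseq_shift2 _ _]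
  have h0 : tseq (-a) (-b) 0 = -a := by simp [tseq]
  rw [h0]
  ring_nf

lemma EE_zero (lam a b : ℂ) : EE lam a b 0 = 1 := Matrix.det_fin_zero

lemma EE_one (lam a b : ℂ) : EE lam a b 1 = lam := by
  unfold EE
  rw [Matrix.det_fin_one]
  simp [tri]

lemma EE_closed (a b Q lam : ℂ) (hQ : 2*Q*(a*b) = lam^2 - a^2 - b^2)
    (ha : a ≠ 0) (hb : b ≠ 0) : ∀ j : ℕ,
    (a * EE lam a b (2*j) = (a*b)^j * (a * (Chebyshev.U ℂ (j:ℤ)).eval Q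
        + b * (Chebyshev.U ℂ ((j:ℤ)-1)).eval Q))
    ∧ (b * EE lam b a (2*j) = (a*b)^j * (b * (Chebyshev.U ℂ (j:ℤ)).eval Q
        + a * (Chebyshev.U ℂ ((j:ℤ)-1)).eval Q))
    ∧ (EE lam a b (2*j+1) = lam * (a*b)^j * (Chebyshev.U ℂ (j:ℤ)).eval Q)
    ∧ (EE lam b a (2*j+1) = lam * (a*b)^j * (Chebyshev.U ℂ (j:ℤ)).eval Q) := by
  intro j
  induction j with
  | zero =>
    refine ⟨?_, ?_, ?_, ?_⟩ <;>
      · show _ = _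
        simp [EE_zero, EE_one, Polynomial.Chebyshev.U_zero, Polynomial.Chebyshev.U_neg_one]
  | succ j ih =>
    obtain ⟨ih1, ih2, ih3, ih4⟩ := ih
    have hrec : (Chebyshev.U ℂ ((j:ℤ)+1)).eval Q
        = 2*Q*(Chebyshev.U ℂ (j:ℤ)).eval Q - (Chebyshev.U ℂ ((j:ℤ)-1)).eval Q := by
      have h := Polynomial.Chebyshev.U_add_two ℂ ((j:ℤ)-1)
      have h' : ((j:ℤ)-1+2) = (j:ℤ)+1 := by ring
      have h'' : ((j:ℤ)-1+1) = (j:ℤ) := by ring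
      rw [h', h''] at h
      rw [h]
      simp [Polynomial.eval_mul, Polynomial.eval_sub]
    have hc1 : ((j+1:ℕ):ℤ) = (j:ℤ)+1 := by push_cast; ring
    have e1 : EE lam a b (2*(j+1)) = lam * EE lam b a (2*j+1) - a^2 * EE lam a b (2*j) := by
      rw [show 2*(j+1) = (2*j)+2 from by ring]
      exact EE_rec lam a b (2*j)
    have e2 : EE lam b a (2*(j+1)) = lam * EE lam a b (2*j+1) - b^2 * EE lam b a (2*j) := by
      rw [show 2*(j+1) = (2*j)+2 from by ring]
      exact EE_rec lam b a (2*j)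
    have e3 : EE lam a b (2*(j+1)+1) = lam * EE lam b a (2*(j+1)) - a^2 * EE lam a b (2*j+1) := by
      rw [show 2*(j+1)+1 = (2*j+1)+2 from by ring, show 2*(j+1) = (2*j+1)+1 from by ring]
      exact EE_rec lam a b (2*j+1)
    have e4 : EE lam b a (2*(j+1)+1) = lam * EE lam a b (2*(j+1)) - b^2 * EE lam b a (2*j+1) := by
      rw [show 2*(j+1)+1 = (2*j+1)+2 from by ring, show 2*(j+1) = (2*j+1)+1 from by ring]
      exact EE_rec lam b a (2*j+1)
    have g1 : a * EE lam a b (2*(j+1)) = (a*b)^(j+1) * (a * (Chebyshev.U ℂ ((j:ℤ)+1)).eval Q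
        + b * (Chebyshev.U ℂ (j:ℤ)).eval Q) := by
      linear_combination a*e1 + a*lam*ih4 - a^2*ih1
        + (-(a*(a*b)^j*((Chebyshev.U ℂ (j:ℤ)).eval Q)))*hQ + (-(a^2*b*(a*b)^j))*hrec
    have g2 : b * EE lam b a (2*(j+1)) = (a*b)^(j+1) * (b * (Chebyshev.U ℂ ((j:ℤ)+1)).eval Q
        + a * (Chebyshev.U ℂ (j:ℤ)).eval Q) := by
      linear_combination b*e2 + b*lam*ih3 - b^2*ih2
        + (-(b*(a*b)^j*((Chebyshev.U ℂ (j:ℤ)).eval Q)))*hQ + (-(a*b^2*(a*b)^j))*hrec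
    have g3 : EE lam a b (2*(j+1)+1) = lam * (a*b)^(j+1) * (Chebyshev.U ℂ ((j:ℤ)+1)).eval Q := by
      apply mul_left_cancel₀ hb
      linear_combination b*e3 + lam*g2 - a^2*b*ih3
    have g4 : EE lam b a (2*(j+1)+1) = lam * (a*b)^(j+1) * (Chebyshev.U ℂ ((j:ℤ)+1)).eval Q := by
      apply mul_left_cancel₀ ha
      linear_combination a*e4 + lam*g1 - b^2*a*ih4
    have hc2 : ((j+1:ℕ):ℤ)-1 = (j:ℤ) := by push_cast; ring
    refine ⟨?_, ?_, ?_, ?_⟩ <;> rw [hc1] <;>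
      first
        | (rw [show ((j:ℤ)+1)-1 = (j:ℤ) from by ring]; first | exact g1 | exact g2)
        | exact g3
        | exact g4

lemma prod_fin_succ_fun (n : ℕ) (f : ℕ → ℂ) :
    ∏ i : Fin (n+1), f i = (∏ i : Fin n, f i) * f n := by
  rw [Fin.prod_univ_castSucc]
  simp

lemma prod_tseq (a b : ℂ) : ∀ r : ℕ, ∏ i : Fin (2*r+1), tseq a b i = a^(r+1) * b^r := by
  intro r
  induction r with
  | zero =>
    rw [show 2*0+1 = 0+1 from rfl, prod_fin_succ_fun]
    simp [tseq]
  | succ r ih =>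
    rw [show 2*(r+1)+1 = (2*r+1+1)+1 from by ring, prod_fin_succ_fun, prod_fin_succ_fun, ih]
    have h1 : tseq a b (2*r+1) = b := by
      simp only [tseq]
      rw [if_neg (by omega)]
    have h2 : tseq a b (2*r+1+1) = a := by
      simp only [tseq]
      rw [if_pos (by omega)]
    rw [h1, h2]
    ring

set_option maxHeartbeats 1000000 in
lemma hM_eq (r : ℕ) (t1 t2 : ℝ) (z1 zn tL tR : ℂ) (lam : ℂ) :
    lam • (1 : Matrix (Fin (2*(r+2))) (Fin (2*(r+2))) ℂ) - Hssh (2*(r+2)) t1 t2 z1 zn tL tR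
      = ((tri (fun _ => lam) (tseq (-(t1:ℂ)) (-(t2:ℂ))) ((2*r+2)+2)).updateRow (Fin.last (2*r+2+1))
        ((tri (fun _ => lam) (tseq (-(t1:ℂ)) (-(t2:ℂ))) ((2*r+2)+2)) (Fin.last (2*r+2+1))
          + (-zn) • (Pi.single (Fin.last (2*r+2+1)) 1 : Fin ((2*r+2)+2) → ℂ)
          + (-tR) • (Pi.single 0 1 : Fin ((2*r+2)+2) → ℂ))).updateRow 0
        ((tri (fun _ => lam) (tseq (-(t1:ℂ)) (-(t2:ℂ))) ((2*r+2)+2)) 0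
          + (-z1) • (Pi.single 0 1 : Fin ((2*r+2)+2) → ℂ)
          + (-tL) • (Pi.single (Fin.last (2*r+2+1)) 1 : Fin ((2*r+2)+2) → ℂ)) := by
  ext i j
  have hi := i.isLt
  have hj := j.isLt
  simp only [Matrix.sub_apply, Matrix.smul_apply, Matrix.one_apply, smul_eq_mul, Hssh,
    Matrix.updateRow_apply, tri, Matrix.of_apply, Pi.add_apply, Pi.smul_apply, Pi.single_apply,
    tseq, Fin.ext_iff, Fin.val_zero, Fin.val_last]
  split_ifs <;> first | ring1 | omega | tauto | (exfalso; omega)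

theorem stmt14 (n k : ℕ) (t1 t2 : ℝ) (ht1 : t1 ≠ 0) (ht2 : t2 ≠ 0)
    (z1 zn tL tR : ℂ) (hk : 2 ≤ k) (hnk : n = 2*k) :
    ∀ lam : ℂ,
      (((t1 * t2 : ℝ) : ℂ))^(-(k : ℤ)) *
          Matrix.det (lam • (1 : Matrix (Fin n) (Fin n) ℂ) - Hssh n t1 t2 z1 zn tL tR) =
        (Chebyshev.U ℂ (k : ℤ)).eval ((lam^2 - (t1 : ℂ)^2 - (t2 : ℂ)^2) / (2 * t1 * t2))
          + ((z1 * zn - tL * tR) / (t2 : ℂ)^2) *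
              (Chebyshev.U ℂ ((k : ℤ) - 2)).eval ((lam^2 - (t1 : ℂ)^2 - (t2 : ℂ)^2) / (2 * t1 * t2))
          + (((t2 : ℂ)^2 - lam * (z1 + zn) + z1 * zn - tL * tR) / ((t1 : ℂ) * t2)) *
              (Chebyshev.U ℂ ((k : ℤ) - 1)).eval ((lam^2 - (t1 : ℂ)^2 - (t2 : ℂ)^2) / (2 * t1 * t2))
          - (tL + tR) / (t2 : ℂ) := by
  intro lam
  obtain ⟨r, rfl⟩ : ∃ r, k = r + 2 := ⟨k - 2, by omega⟩
  subst hnk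
  have ha : (t1:ℂ) ≠ 0 := Complex.ofReal_ne_zero.mpr ht1
  have hb : (t2:ℂ) ≠ 0 := Complex.ofReal_ne_zero.mpr ht2
  set Q : ℂ := (lam^2 - (t1 : ℂ)^2 - (t2 : ℂ)^2) / (2 * (t1:ℂ) * (t2:ℂ)) with hQdef
  have hQ : 2*Q*((t1:ℂ)*(t2:ℂ)) = lam^2 - (t1:ℂ)^2 - (t2:ℂ)^2 := by
    rw [hQdef]; field_simp
  rw [hM_eq r t1 t2 z1 zn tL tR lam, det_corner]
  rw [show (fun i => tseq (-(t1:ℂ)) (-(t2:ℂ)) (i+1)) = tseq (-(t2:ℂ)) (-(t1:ℂ)) from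
    tseq_shift _ _]
  -- identify EE values
  have S1 := (EE_closed (t1:ℂ) (t2:ℂ) Q lam hQ ha hb (r+2)).1
  have S2 := (EE_closed (t1:ℂ) (t2:ℂ) Q lam hQ ha hb (r+1)).2.1
  have S3 := (EE_closed (t1:ℂ) (t2:ℂ) Q lam hQ ha hb (r+1)).2.2.1
  have S4 := (EE_closed (t1:ℂ) (t2:ℂ) Q lam hQ ha hb (r+1)).2.2.2
  push_cast at S1 S2 S3 S4 ⊢
  rw [show ((r:ℤ)+2)-1 = (r:ℤ)+1 from by ring, show ((r:ℤ)+2)-2 = (r:ℤ) from by ring]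
  rw [show ((r:ℤ)+2)-1 = (r:ℤ)+1 from by ring] at S1
  rw [show ((r:ℤ)+1)-1 = (r:ℤ) from by ring] at S2
  set U1 : ℂ := (Chebyshev.U ℂ ((r:ℤ)+2)).eval Q with hU1
  set U2 : ℂ := (Chebyshev.U ℂ ((r:ℤ)+1)).eval Q with hU2
  set U3 : ℂ := (Chebyshev.U ℂ ((r:ℤ))).eval Q with hU3
  have E1 : Matrix.det (tri (fun _ => lam) (tseq (-(t1:ℂ)) (-(t2:ℂ))) (2*r+2+2))
      = ((t1:ℂ)*(t2:ℂ))^(r+1) * ((t1:ℂ)*(t2:ℂ)*U1 + (t2:ℂ)^2*U2) := by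
    have h : EE lam (t1:ℂ) (t2:ℂ) (2*(r+2))
        = ((t1:ℂ)*(t2:ℂ))^(r+1) * ((t1:ℂ)*(t2:ℂ)*U1 + (t2:ℂ)^2*U2) :=
      mul_left_cancel₀ ha (by linear_combination S1)
    exact h
  have E2 : Matrix.det (tri (fun _ => lam) (tseq (-(t1:ℂ)) (-(t2:ℂ))) (2*r+2+1))
      = lam * ((t1:ℂ)*(t2:ℂ))^(r+1) * U2 := by
    have h : EE lam (t1:ℂ) (t2:ℂ) (2*(r+1)+1) = lam * ((t1:ℂ)*(t2:ℂ))^(r+1) * U2 := S3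
    rw [show 2*(r+1)+1 = 2*r+2+1 from by ring] at h
    exact h
  have E3 : Matrix.det (tri (fun _ => lam) (tseq (-(t2:ℂ)) (-(t1:ℂ))) (2*r+2+1))
      = lam * ((t1:ℂ)*(t2:ℂ))^(r+1) * U2 := by
    have h : EE lam (t2:ℂ) (t1:ℂ) (2*(r+1)+1) = lam * ((t1:ℂ)*(t2:ℂ))^(r+1) * U2 := S4
    rw [show 2*(r+1)+1 = 2*r+2+1 from by ring] at h
    exact h
  have E4 : Matrix.det (tri (fun _ => lam) (tseq (-(t2:ℂ)) (-(t1:ℂ))) (2*r+2))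
      = ((t1:ℂ)*(t2:ℂ))^r * ((t1:ℂ)*(t2:ℂ)*U2 + (t1:ℂ)^2*U3) := by
    have h : EE lam (t2:ℂ) (t1:ℂ) (2*(r+1))
        = ((t1:ℂ)*(t2:ℂ))^r * ((t1:ℂ)*(t2:ℂ)*U2 + (t1:ℂ)^2*U3) :=
      mul_left_cancel₀ hb (by linear_combination S2)
    rw [show 2*(r+1) = 2*r+2 from by ring] at h
    exact h
  have EP : ∏ i : Fin (2*r+2+1), tseq (-(t1:ℂ)) (-(t2:ℂ)) i
      = (-(t1:ℂ))^(r+2) * (-(t2:ℂ))^(r+1) := by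
    have h := prod_tseq (-(t1:ℂ)) (-(t2:ℂ)) (r+1)
    rw [show 2*(r+1)+1 = 2*r+2+1 from by ring] at h
    exact h
  rw [E1, E2, E3, E4, EP]
  have hsp : ((-1:ℂ))^(2*r+2+1) * ((-(t1:ℂ))^(r+2) * (-(t2:ℂ))^(r+1))
      = (t1:ℂ)^(r+2) * (t2:ℂ)^(r+1) := by
    rw [neg_pow (t1:ℂ), neg_pow (t2:ℂ), show ((-1:ℂ))^(2*r+2+1) * ((-1:ℂ)^(r+2) * (t1:ℂ)^(r+2)
        * ((-1:ℂ)^(r+1) * (t2:ℂ)^(r+1)))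
      = ((-1:ℂ))^((2*r+2+1)+((r+2)+(r+1))) * ((t1:ℂ)^(r+2) * (t2:ℂ)^(r+1)) from by
        rw [pow_add, pow_add]; ring]
    rw [Even.neg_one_pow ⟨2*r+3, by ring⟩, one_mul]
  rw [hsp]
  rw [show (-((r:ℤ)+2)) = -(((r+2:ℕ)):ℤ) from by push_cast; ring, _root_.zpow_neg, zpow_natCast]
  have hab : ((t1:ℂ)*(t2:ℂ))^(r+2) ≠ 0 := pow_ne_zero _ (mul_ne_zero ha hb)
  field_simp
  ring1
end

section
/- For all x ∈ ℂ, (1 − x²)·P′(x) = A(x)·P(x) + B(x)·U_{n−1}(x), where P′ denotes the derivative of P. -/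
open Polynomial

theorem stmt19 (n : ℕ) (hn : 2 ≤ n) (a b : ℂ) (hab : a * b ≠ 1) :
    ∀ x : ℂ,
      (1 - x^2) *
          (Polynomial.derivative
            (Chebyshev.U ℂ (n : ℤ) - C (a + b) * Chebyshev.U ℂ ((n : ℤ) - 1)
              + C (a * b) * Chebyshev.U ℂ ((n : ℤ) - 2))).eval x =
        ((n : ℂ) * (a + b - x * (1 + a * b)) / (1 - a * b)) *
            (Chebyshev.U ℂ (n : ℤ) - C (a + b) * Chebyshev.U ℂ ((n : ℤ) - 1)
              + C (a * b) * Chebyshev.U ℂ ((n : ℤ) - 2)).eval x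
          + (2 * a * b - x * (a + b) + ((n : ℂ) + 1) * (1 - a * b)
              + (n : ℂ) * (2 * x - a - b) * (2 * x * (a * b) - a - b) / (1 - a * b)) *
            (Chebyshev.U ℂ ((n : ℤ) - 1)).eval x := by
  intro x
  have hq : (1 : ℂ) - a * b ≠ 0 := by
    intro h
    exact hab (by linear_combination -h)
  have e1 := congrArg (eval x) (Chebyshev.add_one_mul_T_eq_poly_in_U (R := ℂ) (n:ℤ))
  have e2 := congrArg (eval x) (Chebyshev.add_one_mul_T_eq_poly_in_U (R := ℂ) ((n:ℤ)-1))
  have e3 := congrArg (eval x) (Chebyshev.add_one_mul_T_eq_poly_in_U (R := ℂ) ((n:ℤ)-2))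
  have t1 := congrArg (eval x) (Chebyshev.T_eq_U_sub_X_mul_U (R := ℂ) ((n:ℤ)+1))
  have t2 := congrArg (eval x) (Chebyshev.T_eq_U_sub_X_mul_U (R := ℂ) ((n:ℤ)))
  have t3 := congrArg (eval x) (Chebyshev.T_eq_U_sub_X_mul_U (R := ℂ) ((n:ℤ)-1))
  have r1 := congrArg (eval x) (Chebyshev.U_add_one (R := ℂ) (n:ℤ))
  have r2 := congrArg (eval x) (Chebyshev.U_eq (R := ℂ) (n:ℤ))
  have i1 : ((n:ℤ) - 2 + 1) = (n:ℤ) - 1 := by ring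
  have i2 : ((n:ℤ) - 1 - 1) = (n:ℤ) - 2 := by ring
  rw [i1] at e3
  rw [i2] at t3
  simp only [eval_mul, eval_add, eval_sub, eval_one, eval_pow, eval_X, eval_intCast,
    Int.cast_natCast, sub_add_cancel, add_sub_cancel_right, eval_ofNat, Int.cast_sub,
    Int.cast_one, Int.cast_ofNat] at e1 e2 e3 t1 t2 t3 r1 r2
  simp only [eval_natCast, eval_intCast] at e1 e2 e3
  simp only [derivative_add, derivative_sub, derivative_C_mul, eval_mul, eval_add, eval_sub,
    eval_C]
  field_simp
  linear_combination (norm := ring_nf)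
    ((1 - a*b)) * e1 - ((1 - a*b) * (a + b)) * e2 + ((1 - a*b) * (a*b)) * e3
    + (-((1 - a*b) * ((n:ℂ) + 1))) * t1 + ((1 - a*b) * (a + b) * (n:ℂ)) * t2
    + (-((1 - a*b) * (a*b) * ((n:ℂ) - 1))) * t3
    + (-((1 - a*b) * ((n:ℂ) + 1))) * r1 + ((n:ℂ) * (a*b) * (2*x - a - b)) * r2
end
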